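/- Set μ_δ := δ·∫_0^{2/(3δ)} x·f(x) dx, and suppose μ_δ ≤ 2/3. Then for every integer n ≥ 2, Q_δ(n) ≤ ∏_{i=1}^{n−1} ((i+1)/(i+2) − μ_δ). -/

import Mathlib

open scoped BigOperators
open Filter Set MeasureTheory

/-- `Q f δ n = ℙ(τ ≥ n)` for the 1-d senile reinforced random walk stochastically
perturbed by `δ·ξ_n`, with `ξ_n` i.i.d. with density `f` on `[0,∞)`:
`Q_δ(n) = ∏_{i=1}^{n-1} ∫_0^{(i+1)/(δ(i+2))} ((i+1)/(i+2) - δx) f(x) dx`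
(`Q f δ 1 = 1` since the product is empty). -/
noncomputable def Q (f : ℝ → ℝ) (δ : ℝ) (n : ℕ) : ℝ :=
  ∏ i ∈ Finset.Icc 1 (n - 1),
    ∫ x in Set.Ioc (0 : ℝ) (((i : ℝ) + 1) / (δ * ((i : ℝ) + 2))),
      (((i : ℝ) + 1) / ((i : ℝ) + 2) - δ * x) * f x

/-- with `μ_δ := δ·∫_0^{2/(3δ)} x f(x) dx ≤ 2/3`, for every `n ≥ 2`,
`Q_δ(n) ≤ ∏_{i=1}^{n-1} ((i+1)/(i+2) - μ_δ)`. -/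
theorem Q_le_deterministic_bound
    (f : ℝ → ℝ) (hmeas : Measurable f) (hnonneg : ∀ x, 0 ≤ f x)
    (hdensity : ∫ x in Set.Ioi (0 : ℝ), f x = 1)
    (δ : ℝ) (hδ : 0 < δ)
    (hμ : δ * ∫ x in Set.Ioc (0 : ℝ) (2 / (3 * δ)), x * f x ≤ 2/3) :
    ∀ n : ℕ, 2 ≤ n →
      Q f δ n ≤ ∏ i ∈ Finset.Icc 1 (n - 1),
        (((i : ℝ) + 1) / ((i : ℝ) + 2) -
          δ * ∫ x in Set.Ioc (0 : ℝ) (2 / (3 * δ)), x * f x) := by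
  intro n hn
  have hf_int : IntegrableOn f (Set.Ioi (0:ℝ)) := by
    by_contra h
    rw [MeasureTheory.integral_undef h] at hdensity
    norm_num at hdensity
  unfold Q
  apply Finset.prod_le_prod
  · intro i _
    apply MeasureTheory.setIntegral_nonneg measurableSet_Ioc
    intro x hx
    have hi2 : (0:ℝ) < (i:ℝ) + 2 := by positivity
    have hdx : δ * x ≤ ((i:ℝ)+1)/((i:ℝ)+2) := by
      have h1 : δ * x ≤ δ * (((i:ℝ)+1)/(δ*((i:ℝ)+2))) :=
        mul_le_mul_of_nonneg_left hx.2 hδ.le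
      have h2 : δ * (((i:ℝ)+1)/(δ*((i:ℝ)+2))) = ((i:ℝ)+1)/((i:ℝ)+2) := by
        field_simp
      linarith
    have hf := hnonneg x
    nlinarith
  · intro i hi
    have hi1 : 1 ≤ i := (Finset.mem_Icc.mp hi).1
    set a : ℝ := ((i:ℝ)+1)/((i:ℝ)+2) with ha_def
    set b : ℝ := ((i:ℝ)+1)/(δ*((i:ℝ)+2)) with hb_def
    set c : ℝ := 2/(3*δ) with hc_def
    have hi2 : (0:ℝ) < (i:ℝ) + 2 := by positivity
    have hi1' : (0:ℝ) < (i:ℝ) + 1 := by positivity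
    have ha0 : 0 ≤ a := by rw [ha_def]; exact div_nonneg hi1'.le hi2.le
    have hb0 : 0 ≤ b := by rw [hb_def]; positivity
    have hab : b = a / δ := by rw [ha_def, hb_def, div_div, mul_comm δ]
    have ha23 : (2:ℝ)/3 ≤ a := by
      rw [ha_def, div_le_div_iff₀ (by norm_num) hi2]
      have : (1:ℝ) ≤ (i:ℝ) := by exact_mod_cast hi1
      nlinarith
    have hcb : c ≤ b := by
      rw [hc_def, hab]
      rw [div_le_div_iff₀ (by positivity) hδ]
      nlinarith
    have hfb : IntegrableOn f (Set.Ioc 0 b) :=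
      hf_int.mono_set Set.Ioc_subset_Ioi_self
    have hxf : IntegrableOn (fun x => x * f x) (Set.Ioc 0 b) := by
      apply (hfb.const_mul b).mono' ((measurable_id.mul hmeas).aestronglyMeasurable)
      filter_upwards [MeasureTheory.ae_restrict_mem measurableSet_Ioc] with x hx
      simp only [Pi.mul_apply, id_eq]
      rw [Real.norm_eq_abs, abs_of_nonneg (mul_nonneg hx.1.le (hnonneg x))]
      exact mul_le_mul_of_nonneg_right hx.2 (hnonneg x)
    have hsplit : (∫ x in Set.Ioc (0:ℝ) b, (a - δ * x) * f x)
        = a * (∫ x in Set.Ioc (0:ℝ) b, f x)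
          - δ * (∫ x in Set.Ioc (0:ℝ) b, x * f x) := by
      have : (∫ x in Set.Ioc (0:ℝ) b, (a - δ * x) * f x)
          = ∫ x in Set.Ioc (0:ℝ) b, (a * f x - δ * (x * f x)) := by
        congr 1; ext x; ring
      rw [this, MeasureTheory.integral_sub (hfb.const_mul a) (hxf.const_mul δ),
        MeasureTheory.integral_const_mul, MeasureTheory.integral_const_mul]
    have hfle : (∫ x in Set.Ioc (0:ℝ) b, f x) ≤ 1 := by
      rw [← hdensity]
      apply MeasureTheory.setIntegral_mono_set hf_int
      · filter_upwards with x using hnonneg x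
      · filter_upwards with x hx using Set.Ioc_subset_Ioi_self hx
    have hxfle : (∫ x in Set.Ioc (0:ℝ) c, x * f x)
        ≤ ∫ x in Set.Ioc (0:ℝ) b, x * f x := by
      apply MeasureTheory.setIntegral_mono_set hxf
      · filter_upwards [MeasureTheory.ae_restrict_mem measurableSet_Ioc] with x hx
        exact mul_nonneg hx.1.le (hnonneg x)
      · filter_upwards with x hx using Set.Ioc_subset_Ioc_right hcb hx
    calc (∫ x in Set.Ioc (0:ℝ) b, (a - δ * x) * f x)
        = a * (∫ x in Set.Ioc (0:ℝ) b, f x)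
          - δ * (∫ x in Set.Ioc (0:ℝ) b, x * f x) := hsplit
      _ ≤ a - δ * (∫ x in Set.Ioc (0:ℝ) c, x * f x) := by
          have h1 : a * (∫ x in Set.Ioc (0:ℝ) b, f x) ≤ a * 1 :=
            mul_le_mul_of_nonneg_left hfle ha0
          have h2 : δ * (∫ x in Set.Ioc (0:ℝ) c, x * f x)
              ≤ δ * (∫ x in Set.Ioc (0:ℝ) b, x * f x) :=
            mul_le_mul_of_nonneg_left hxfle hδ.le
          linarith
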